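/- Let E be a generalized pseudoeffect algebra. Then: (i) {π_c : c ∈ Γ(E)} is a sublattice of the boolean algebra ΓEX(E), and as such is a generalized boolean algebra; (ii) Γ(E) is a commutative lattice-ordered sub-GPEA of E; (iii) the mapping c ↦ π_c from Γ(E) onto {π_c : c ∈ Γ(E)} is a lattice isomorphism; (iv) Γ(E) is a generalized boolean algebra, i.e., a distributive and relatively complemented lattice with smallest element 0; (v) E is a pseudoeffect algebra (has a greatest element) iff {π_c : c ∈ Γ(E)} = ΓEX(E). -/

import Mathlib

/- Common framework: generalized pseudoeffect algebras (GPEAs), after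
   Foulis, Pulmannová, Vinceková, "The exocenter and type decompositions for
   generalized pseudoeffect algebras".
   A partial binary operation ⊕ is represented by its graph
   `R : E → E → E → Prop`, where `R a b s` means "a ⊕ b is defined and equals s". -/

universe u v

namespace GPEApaper

/-- Raw data of a partial algebra: the graph of a partial binary operation
together with a zero element. -/
structure PartialAlg (E : Type u) where
  R : E → E → E → Prop
  zero : E

namespace PartialAlg

variable {E : Type u} (A : PartialAlg E)

/-- The axioms (GPEA1)–(GPEA5) of a generalized pseudoeffect algebra,
including the functionality (well-definedness) of the partial operation. -/
def IsGPEA : Prop :=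
  -- ⊕ is a partial operation (single-valued)
  (∀ a b c d : E, A.R a b c → A.R a b d → c = d) ∧
  -- (GPEA1) associativity, both directions
  (∀ a b c ab abc : E, A.R a b ab → A.R ab c abc → ∃ bc, A.R b c bc ∧ A.R a bc abc) ∧
  (∀ a b c bc abc : E, A.R b c bc → A.R a bc abc → ∃ ab, A.R a b ab ∧ A.R ab c abc) ∧
  -- (GPEA2) conjugacy
  (∀ a b s : E, A.R a b s → (∃ d, A.R d a s) ∧ (∃ e, A.R b e s)) ∧
  -- (GPEA3) cancellation
  (∀ a b c s : E, A.R a b s → A.R a c s → b = c) ∧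
  (∀ a b c s : E, A.R b a s → A.R c a s → b = c) ∧
  -- (GPEA4) positivity
  (∀ a b : E, A.R a b A.zero → a = A.zero ∧ b = A.zero) ∧
  -- (GPEA5) zero element
  (∀ a : E, A.R a A.zero a ∧ A.R A.zero a a)

/-- a ⊕ b is defined. -/
def Defined (a b : E) : Prop := ∃ s, A.R a b s

/-- The induced partial order: a ≤ b iff a ⊕ x = b for some x. -/
def le (a b : E) : Prop := ∃ x, A.R a x b

/-- Orthogonality: p ⊥ q iff p ⊕ q and q ⊕ p both exist and are equal. -/
def perp (a b : E) : Prop := ∃ s, A.R a b s ∧ A.R b a s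

/-- b is an upper bound of the set S. -/
def IsUB (S : Set E) (b : E) : Prop := ∀ a ∈ S, A.le a b

/-- s is the supremum (least upper bound) of the set S in (E, ≤). -/
def IsSup (S : Set E) (s : E) : Prop := A.IsUB S s ∧ ∀ b, A.IsUB S b → A.le s b

/-- s is the infimum (greatest lower bound) of the set S in (E, ≤). -/
def IsInf (S : Set E) (s : E) : Prop :=
  (∀ a ∈ S, A.le s a) ∧ ∀ b, (∀ a ∈ S, A.le b a) → A.le b s

/-- An ideal of a GPEA. -/
def IsIdeal (I : Set E) : Prop :=
  I.Nonempty ∧ (∀ a ∈ I, ∀ b, A.le b a → b ∈ I) ∧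
    ∀ a ∈ I, ∀ b ∈ I, ∀ s, A.R a b s → s ∈ I

/-- E = S ⊕ S′ : S and S′ are ideals, elements of S are orthogonal to elements
of S′, and every element of E has a unique decomposition a = a₁ ⊕ a₂ with
a₁ ∈ S, a₂ ∈ S′. -/
def IsDirectSum (S S' : Set E) : Prop :=
  A.IsIdeal S ∧ A.IsIdeal S' ∧ (∀ a ∈ S, ∀ b ∈ S', A.perp a b) ∧
    ∀ a : E, ∃! p : E × E, p.1 ∈ S ∧ p.2 ∈ S' ∧ A.R p.1 p.2 a

/-- A central ideal (direct summand). -/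
def IsCentralIdeal (S : Set E) : Prop := ∃ S', A.IsDirectSum S S'

/-- A normal ideal. -/
def IsNormalIdeal (I : Set E) : Prop :=
  A.IsIdeal I ∧ ∀ a x y s : E, A.R a x s → A.R y a s → (x ∈ I ↔ y ∈ I)

/-- The axioms (EXC1)–(EXC4): π belongs to the exocenter ΓEX(E). -/
def IsExo (π : E → E) : Prop :=
  (∀ e f s, A.R e f s → A.R (π e) (π f) (π s)) ∧
  (∀ e, π (π e) = π e) ∧
  (∀ e, A.le (π e) e) ∧
  (∀ e f, π e = e → π f = A.zero → A.perp e f)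

/-- For a ≤ b, `A.rdiv a b` is the element a/b, i.e. the unique x with
a ⊕ x = b (chosen by Hilbert choice when it exists). -/
noncomputable def rdiv (a b : E) : E :=
  letI : Nonempty E := ⟨A.zero⟩
  Classical.epsilon fun x => A.R a x b

/-- For π in the exocenter, π′ e := (π e)/e. -/
noncomputable def exoCompl (π : E → E) : E → E := fun e => A.rdiv (π e) e

/-- The order on the exocenter: ξ ≤ π iff ξ = ξ ∘ π. -/
def exoLe (_A : PartialAlg E) (ξ π : E → E) : Prop := ξ = ξ ∘ π

/-- Disjointness in the boolean algebra ΓEX(E): the meet (= composition)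
of ξ and π is the zero map. -/
def exoDisjoint (ξ π : E → E) : Prop := ∀ e, ξ (π e) = A.zero

/-- The join in the boolean algebra ΓEX(E): π ∨ ξ = (π′ ∘ ξ′)′. -/
noncomputable def exoSup (π ξ : E → E) : E → E :=
  A.exoCompl (A.exoCompl π ∘ A.exoCompl ξ)

/-- σ is the least upper bound of a set S of exocenter elements,
with respect to the order of the boolean algebra ΓEX(E). -/
def IsExoLUB (S : Set (E → E)) (σ : E → E) : Prop :=
  A.IsExo σ ∧ (∀ π ∈ S, A.exoLe π σ) ∧
    ∀ β, A.IsExo β → (∀ π ∈ S, A.exoLe π β) → A.exoLe σ β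

/-- A central element (C1)–(C4). -/
def Central (c : E) : Prop :=
  (∀ a : E, ∃ a₁ a₂, A.le a₁ c ∧ A.Defined a₂ c ∧ A.R a₁ a₂ a) ∧
  (∀ a b : E, A.le a c → A.Defined b c → A.perp a b) ∧
  (∀ a b s : E, A.le a c → A.le b c → A.R a b s → A.le s c) ∧
  (∀ a b ab : E, A.Defined a c → A.Defined b c → A.R a b ab → A.Defined ab c)

/-- `A.ListSumsTo [e₁, …, eₙ] s` : the orthosum e₁ ⊕ (e₂ ⊕ (⋯ ⊕ eₙ)) is
defined and equals s (empty orthosum is 0). -/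
def ListSumsTo (A : PartialAlg E) : List E → E → Prop
  | [], s => s = A.zero
  | a :: l, s => ∃ t, A.ListSumsTo l t ∧ A.R a t s

/-- The finite subfamily indexed by F is orthogonal with orthosum s:
every enumeration of F yields the orthosum s. -/
def FinsetSumsTo {ι : Type v} (e : ι → E) (F : Finset ι) (s : E) : Prop :=
  ∀ l : List ι, l.Nodup →
    (letI : DecidableEq ι := Classical.decEq ι; l.toFinset) = F →
    A.ListSumsTo (l.map e) s

/-- A family is orthogonal iff every finite subfamily is orthogonal
(all enumerations have a common orthosum). -/
def IsOrthogonal {ι : Type v} (e : ι → E) : Prop :=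
  ∀ F : Finset ι, ∃ s, A.FinsetSumsTo e F s

/-- A family is orthosummable with orthosum s iff it is orthogonal and s is
the supremum of its finite partial orthosums. -/
def IsOrthosum {ι : Type v} (e : ι → E) (s : E) : Prop :=
  A.IsOrthogonal e ∧ A.IsSup {t | ∃ F : Finset ι, A.FinsetSumsTo e F t} s

/-- A family (eᵢ) is ΓEX-orthogonal iff there is a pairwise disjoint family
(πᵢ) in the exocenter with πᵢ eᵢ = eᵢ for all i. -/
def GEXOrthogonal {ι : Type v} (e : ι → E) : Prop :=
  ∃ π : ι → E → E, (∀ i, A.IsExo (π i)) ∧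
    (∀ i j, i ≠ j → A.exoDisjoint (π i) (π j)) ∧ ∀ i, π i (e i) = e i

/-- E is centrally orthocomplete: (CO1) every ΓEX-orthogonal family is
orthosummable, and (CO2) orthosums respect one-sided summability. -/
def IsCOGPEA : Prop :=
  (∀ {ι : Type u} (e : ι → E), A.GEXOrthogonal e → ∃ s, A.IsOrthosum e s) ∧
  (∀ {ι : Type u} (e : ι → E) (s : E), A.GEXOrthogonal e → A.IsOrthosum e s →
    ∀ a : E, ((∀ i, A.Defined a (e i)) → A.Defined a s) ∧
             ((∀ i, A.Defined (e i) a) → A.Defined s a))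

/-- γ is the exocentral cover of e: the smallest element of ΓEX(E) fixing e. -/
def IsExoCover (e : E) (γ : E → E) : Prop :=
  A.IsExo γ ∧ γ e = e ∧ ∀ π, A.IsExo π → π e = e → A.exoLe γ π

/-- The restriction of the partial algebra to a subset containing 0 (with the
operation defined whenever it is defined in E and the result lies in the subset). -/
def restrictSet (S : Set E) (h0 : A.zero ∈ S) : PartialAlg S where
  R a b s := A.R a.1 b.1 s.1
  zero := ⟨A.zero, h0⟩

/-- The axioms (PEA1)–(PEA4) of a pseudoeffect algebra with unit `one`
(including single-valuedness of the partial operation). -/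
def IsPEA (one : E) : Prop :=
  (∀ a b c d : E, A.R a b c → A.R a b d → c = d) ∧
  -- (PEA1)
  (∀ a b c ab abc : E, A.R a b ab → A.R ab c abc → ∃ bc, A.R b c bc ∧ A.R a bc abc) ∧
  (∀ a b c bc abc : E, A.R b c bc → A.R a bc abc → ∃ ab, A.R a b ab ∧ A.R ab c abc) ∧
  -- (PEA2)
  (∀ a : E, ∃! d, A.R a d one) ∧
  (∀ a : E, ∃! e, A.R e a one) ∧
  -- (PEA3)
  (∀ a b s : E, A.R a b s → (∃ d, A.R d a s) ∧ (∃ e, A.R b e s)) ∧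
  -- (PEA4)
  (∀ a s : E, A.R one a s ∨ A.R a one s → a = A.zero)

end PartialAlg

end GPEApaper

namespace GPEAX
open GPEApaper PartialAlg

variable {E : Type u} {A : PartialAlg E}

/-! ### Accessors for the GPEA axioms -/

theorem fnR (hA : A.IsGPEA) {a b c d : E} (h1 : A.R a b c) (h2 : A.R a b d) : c = d :=
  hA.1 a b c d h1 h2

theorem as1 (hA : A.IsGPEA) {a b c ab abc : E} (h1 : A.R a b ab) (h2 : A.R ab c abc) :
    ∃ bc, A.R b c bc ∧ A.R a bc abc := hA.2.1 a b c ab abc h1 h2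

theorem as2 (hA : A.IsGPEA) {a b c bc abc : E} (h1 : A.R b c bc) (h2 : A.R a bc abc) :
    ∃ ab, A.R a b ab ∧ A.R ab c abc := hA.2.2.1 a b c bc abc h1 h2

theorem conj (hA : A.IsGPEA) {a b s : E} (h : A.R a b s) :
    (∃ d, A.R d a s) ∧ (∃ e, A.R b e s) := hA.2.2.2.1 a b s h

theorem cancL (hA : A.IsGPEA) {a b c s : E} (h1 : A.R a b s) (h2 : A.R a c s) : b = c :=
  hA.2.2.2.2.1 a b c s h1 h2

theorem cancR (hA : A.IsGPEA) {a b c s : E} (h1 : A.R b a s) (h2 : A.R c a s) : b = c :=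
  hA.2.2.2.2.2.1 a b c s h1 h2

theorem posR (hA : A.IsGPEA) {a b : E} (h : A.R a b A.zero) : a = A.zero ∧ b = A.zero :=
  hA.2.2.2.2.2.2.1 a b h

theorem zR (hA : A.IsGPEA) (a : E) : A.R a A.zero a := (hA.2.2.2.2.2.2.2 a).1

theorem zL (hA : A.IsGPEA) (a : E) : A.R A.zero a a := (hA.2.2.2.2.2.2.2 a).2

/-! ### The partial order -/

theorem le_refl' (hA : A.IsGPEA) (a : E) : A.le a a := ⟨A.zero, zR hA a⟩

theorem le_trans' (hA : A.IsGPEA) {a b c : E} (h1 : A.le a b) (h2 : A.le b c) : A.le a c := by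
  obtain ⟨x, hx⟩ := h1; obtain ⟨y, hy⟩ := h2
  obtain ⟨t, _, ht2⟩ := as1 hA hx hy
  exact ⟨t, ht2⟩

theorem le_antisymm' (hA : A.IsGPEA) {a b : E} (h1 : A.le a b) (h2 : A.le b a) : a = b := by
  obtain ⟨x, hx⟩ := h1; obtain ⟨y, hy⟩ := h2
  obtain ⟨t, ht, ht2⟩ := as1 hA hx hy
  have h0 : t = A.zero := cancL hA ht2 (zR hA a)
  rw [h0] at ht
  have hx0 : x = A.zero := (posR hA ht).1
  rw [hx0] at hx
  exact (fnR hA hx (zR hA a)).symm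

theorem zero_le (hA : A.IsGPEA) (a : E) : A.le A.zero a := ⟨a, zL hA a⟩

theorem le_zero (hA : A.IsGPEA) {a : E} (h : A.le a A.zero) : a = A.zero := by
  obtain ⟨x, hx⟩ := h; exact (posR hA hx).1

theorem perp_symm {a b : E} (h : A.perp a b) : A.perp b a := by
  obtain ⟨s, h1, h2⟩ := h; exact ⟨s, h2, h1⟩

theorem le_of_R_left (hA : A.IsGPEA) {a b s : E} (h : A.R a b s) : A.le a s := ⟨b, h⟩

theorem le_of_R_right (hA : A.IsGPEA) {a b s : E} (h : A.R a b s) : A.le b s :=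
  (conj hA h).2

/-! ### Exocenter basics -/

theorem exo_add (hπ : A.IsExo π) {e f s : E} (h : A.R e f s) : A.R (π e) (π f) (π s) :=
  hπ.1 e f s h

theorem exo_idem (hπ : A.IsExo π) (e : E) : π (π e) = π e := hπ.2.1 e

theorem exo_le (hπ : A.IsExo π) (e : E) : A.le (π e) e := hπ.2.2.1 e

theorem exo_perp (hπ : A.IsExo π) {e f : E} (h1 : π e = e) (h2 : π f = A.zero) :
    A.perp e f := hπ.2.2.2 e f h1 h2

theorem exo_zero (hA : A.IsGPEA) (hπ : A.IsExo π) : π A.zero = A.zero := by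
  have h := exo_add hπ (zR hA A.zero)
  exact cancL hA h (zR hA (π A.zero))

theorem exo_mono (hπ : A.IsExo π) {a b : E} (h : A.le a b) : A.le (π a) (π b) := by
  obtain ⟨x, hx⟩ := h; exact ⟨π x, exo_add hπ hx⟩

theorem exo_compl_zero (hA : A.IsGPEA) (hπ : A.IsExo π) {e x : E} (h : A.R (π e) x e) :
    π x = A.zero := by
  have h2 := exo_add hπ h
  rw [exo_idem hπ] at h2
  exact cancL hA h2 (zR hA (π e))

theorem fixed_downward (hA : A.IsGPEA) (hπ : A.IsExo π) {w y : E}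
    (hw : π w = w) (hy : A.le y w) : π y = y := by
  obtain ⟨z, hz⟩ := hy
  obtain ⟨u, hu⟩ := exo_le hπ y
  have hπz : A.R (π y) (π z) w := by have := exo_add hπ hz; rwa [hw] at this
  obtain ⟨t, ht1, ht2⟩ := as1 hA hu hz
  have htz : t = π z := cancL hA ht2 hπz
  rw [htz] at ht1
  -- ht1 : A.R u z (π z), so z ≤ π z
  have h1 : A.le z (π z) := le_of_R_right hA ht1
  have h2 : π z = z := le_antisymm' hA (exo_le hπ z) h1
  rw [h2] at ht1
  have hu0 : u = A.zero := cancR hA ht1 (zL hA z)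
  rw [hu0] at hu
  exact (fnR hA hu (zR hA (π y))).symm

/-- `m` is a fixed top for `π`: `π m = m` and every `π a ≤ m`. -/
def FixTop (A : PartialAlg E) (π : E → E) (m : E) : Prop :=
  π m = m ∧ ∀ a, A.le (π a) m

theorem fixed_iff (hA : A.IsGPEA) (hπ : A.IsExo π) {m : E} (hm : FixTop A π m) {e : E} :
    π e = e ↔ A.le e m := by
  constructor
  · intro h; have := hm.2 e; rwa [h] at this
  · exact fixed_downward hA hπ hm.1

theorem range_of_fixtop (hA : A.IsGPEA) (hπ : A.IsExo π) {m : E} (hm : FixTop A π m) :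
    Set.range π = {a : E | A.le a m} := by
  ext a
  constructor
  · rintro ⟨x, rfl⟩; exact hm.2 x
  · intro ha; exact ⟨a, (fixed_iff hA hπ hm).2 ha⟩

theorem fixtop_of_range (hA : A.IsGPEA) (hπ : A.IsExo π) {c : E}
    (hr : Set.range π = {a : E | A.le a c}) : FixTop A π c := by
  have hle : ∀ e, A.le (π e) c := fun e => by
    have : π e ∈ Set.range π := ⟨e, rfl⟩
    rwa [hr] at this
  have : c ∈ Set.range π := by rw [hr]; exact le_refl' hA c
  obtain ⟨x, hx⟩ := this
  have : π c = c := by rw [← hx, exo_idem hπ]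
  exact ⟨this, hle⟩

end GPEAX
namespace GPEAX
open GPEApaper PartialAlg

variable {E : Type u} {A : PartialAlg E} {π : E → E}

theorem fix_add_self (hA : A.IsGPEA) (hπ : A.IsExo π) {m : E} (hm : FixTop A π m)
    {x s : E} (hx : A.le x m) (h : A.R x m s) : x = A.zero := by
  have hfx : π x = x := (fixed_iff hA hπ hm).2 hx
  have h2 : A.R x m (π s) := by have := exo_add hπ h; rwa [hfx, hm.1] at this
  have hs : π s = s := fnR hA h2 h
  have hsm : s = m := le_antisymm' hA (by rw [← hs]; exact hm.2 s) (le_of_R_right hA h)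
  rw [hsm] at h
  exact cancR hA h (zL hA m)

theorem self_add_fix (hA : A.IsGPEA) (hπ : A.IsExo π) {m : E} (hm : FixTop A π m)
    {x s : E} (hx : A.le x m) (h : A.R m x s) : x = A.zero := by
  have hfx : π x = x := (fixed_iff hA hπ hm).2 hx
  have h2 : A.R m x (π s) := by have := exo_add hπ h; rwa [hfx, hm.1] at this
  have hs : π s = s := fnR hA h2 h
  have hsm : s = m := le_antisymm' hA (by rw [← hs]; exact hm.2 s) (le_of_R_left hA h)
  rw [hsm] at h
  exact cancL hA h (zR hA m)

theorem def_zero (hA : A.IsGPEA) (hπ : A.IsExo π) {m : E} (hm : FixTop A π m)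
    {b s : E} (h : A.R b m s) : π b = A.zero := by
  obtain ⟨ρ, hρ⟩ := exo_le hπ b
  have hρ0 : π ρ = A.zero := exo_compl_zero hA hπ hρ
  obtain ⟨t, htm, htρ⟩ := exo_perp hπ hm.1 hρ0
  obtain ⟨u, hu1, hu2⟩ := as1 hA hρ h
  have hut : u = t := fnR hA hu1 htρ
  rw [hut] at hu2
  obtain ⟨v, hv1, hv2⟩ := as2 hA htm hu2
  exact fix_add_self hA hπ hm (hm.2 b) hv1

/-- KEY: if `π` is in the exocenter and `m` is a fixed top for `π`,
then `m` is central. -/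
theorem central_of_fixtop (hA : A.IsGPEA) (hπ : A.IsExo π) {m : E} (hm : FixTop A π m) :
    A.Central m := by
  refine ⟨?_, ?_, ?_, ?_⟩
  · -- C1
    intro a
    obtain ⟨ρ, hρ⟩ := exo_le hπ a
    have hρ0 : π ρ = A.zero := exo_compl_zero hA hπ hρ
    obtain ⟨t, htm, htρ⟩ := exo_perp hπ hm.1 hρ0
    exact ⟨π a, ρ, hm.2 a, ⟨t, htρ⟩, hρ⟩
  · -- C2
    intro a b ha hb
    obtain ⟨s, hs⟩ := hb
    have hb0 : π b = A.zero := def_zero hA hπ hm hs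
    have hfa : π a = a := (fixed_iff hA hπ hm).2 ha
    exact exo_perp hπ hfa hb0
  · -- C3
    intro a b s ha hb h
    have h2 : A.R a b (π s) := by
      have := exo_add hπ h
      rwa [(fixed_iff hA hπ hm).2 ha, (fixed_iff hA hπ hm).2 hb] at this
    have : π s = s := fnR hA h2 h
    exact (fixed_iff hA hπ hm).1 this
  · -- C4
    intro a b ab ha hb hab
    obtain ⟨s, hs⟩ := ha
    obtain ⟨t, ht⟩ := hb
    have ha0 : π a = A.zero := def_zero hA hπ hm hs
    have hb0 : π b = A.zero := def_zero hA hπ hm ht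
    have h2 : A.R A.zero A.zero (π ab) := by
      have := exo_add hπ hab; rwa [ha0, hb0] at this
    have hab0 : π ab = A.zero := fnR hA h2 (zR hA A.zero)
    obtain ⟨u, hu1, hu2⟩ := exo_perp hπ hm.1 hab0
    exact ⟨u, hu2⟩

/-- Shuffle lemma: (x₁⊕x₂)⊕(y₁⊕y₂) = (x₁⊕y₁)⊕(x₂⊕y₂) when x₂ ⊥ y₁. -/
theorem shuf (hA : A.IsGPEA) {x1 x2 X y1 y2 Y S : E}
    (h1 : A.R x1 x2 X) (h2 : A.R y1 y2 Y) (h3 : A.R X Y S) (hp : A.perp x2 y1) :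
    ∃ z w, A.R x1 y1 z ∧ A.R x2 y2 w ∧ A.R z w S := by
  obtain ⟨t, ht1, ht2⟩ := as1 hA h1 h3
  -- ht1 : R x2 Y t, ht2 : R x1 t S
  obtain ⟨u, hu1, hu2⟩ := as2 hA h2 ht1
  -- hu1 : R x2 y1 u, hu2 : R u y2 t
  obtain ⟨v, hv1, hv2⟩ := hp
  have huv : u = v := fnR hA hu1 hv1
  rw [huv] at hu2
  -- hv2 : R y1 x2 v, hu2 : R v y2 t
  obtain ⟨w, hw1, hw2⟩ := as1 hA hv2 hu2
  -- hw1 : R x2 y2 w, hw2 : R y1 w t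
  obtain ⟨z, hz1, hz2⟩ := as2 hA hw2 ht2
  exact ⟨z, w, hz1, hw1, hz2⟩

/-- Orthogonality extension: if e ⊥ q, e ⊥ r, (e⊕q) ⊥ r and f = q⊕r, then e ⊥ f. -/
theorem lorth (hA : A.IsGPEA) {e q r f w wr : E}
    (heq : A.R e q w) (hqe : A.R q e w) (her : A.perp e r) (hqr : A.R q r f)
    (hwr : A.R w r wr) (_hrw : A.R r w wr) : A.R e f wr ∧ A.R f e wr := by
  constructor
  · obtain ⟨t, ht1, ht2⟩ := as1 hA heq hwr
    rwa [fnR hA ht1 hqr] at ht2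
  · obtain ⟨s', hs1, hs2⟩ := as1 hA hqe hwr
    obtain ⟨er, her1, her2⟩ := her
    rw [fnR hA hs1 her1] at hs2
    obtain ⟨qr, hqr1, hqr2⟩ := as2 hA her2 hs2
    rwa [fnR hA hqr1 hqr] at hqr2

end GPEAX
namespace GPEAX
open GPEApaper PartialAlg

variable {E : Type u} {A : PartialAlg E} {π πc πd : E → E} {c d : E}

theorem le_glb (hA : A.IsGPEA) (hπ : A.IsExo π) (hm : FixTop A π c)
    {z a : E} (h1 : A.le z a) (h2 : A.le z c) : A.le z (π a) := by
  have hz : π z = z := (fixed_iff hA hπ hm).2 h2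
  have := exo_mono hπ h1
  rwa [hz] at this

/-- The composition `πc ∘ πd` is in the exocenter with fixed top `πc d`,
provided `d` is central. -/
theorem meet_exo (hA : A.IsGPEA) (hπc : A.IsExo πc) (htc : FixTop A πc c)
    (hπd : A.IsExo πd) (htd : FixTop A πd d) (hd : A.Central d) :
    A.IsExo (πc ∘ πd) ∧ FixTop A (πc ∘ πd) (πc d) := by
  have hfixcd : ∀ x : E, A.le x c → A.le x d → (πc ∘ πd) x = x := by
    intro x h1 h2
    have hdx : πd x = x := (fixed_iff hA hπd htd).2 h2
    have hcx : πc x = x := (fixed_iff hA hπc htc).2 h1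
    simp only [Function.comp_apply, hdx, hcx]
  have hlec : ∀ a, A.le ((πc ∘ πd) a) c := fun a => htc.2 (πd a)
  have hled : ∀ a, A.le ((πc ∘ πd) a) d :=
    fun a => le_trans' hA (exo_le hπc (πd a)) (htd.2 a)
  have hexo : A.IsExo (πc ∘ πd) := by
    refine ⟨fun e f s h => exo_add hπc (exo_add hπd h), fun e => ?_, fun e => ?_, ?_⟩
    · exact hfixcd _ (hlec e) (hled e)
    · exact le_trans' hA (exo_le hπc (πd e)) (exo_le hπd e)
    · -- EXC4
      intro e f he hf
      have hde : πd e = e := by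
        have h1 : A.le e (πd e) := by
          have := exo_le hπc (πd e); rwa [show πc (πd e) = e from he] at this
        exact le_antisymm' hA (exo_le hπd e) h1
      have hce : πc e = e := by have := he; rwa [show (πc ∘ πd) e = πc (πd e) from rfl, hde] at this
      have hq : πc (πd f) = A.zero := hf
      obtain ⟨r, hr⟩ := exo_le hπd f
      have hr0 : πd r = A.zero := exo_compl_zero hA hπd hr
      obtain ⟨w, heq, hqe⟩ := exo_perp hπc hce hq
      -- heq : R e (πd f) w, hqe : R (πd f) e w
      have her : A.perp e r := exo_perp hπd hde hr0
      have hwd : A.le w d := hd.2.2.1 e (πd f) w ((fixed_iff hA hπd htd).1 hde)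
        (htd.2 f) heq
      have hww : πd w = w := (fixed_iff hA hπd htd).2 hwd
      obtain ⟨wr, hwr, hrw⟩ := exo_perp hπd hww hr0
      obtain ⟨h1, h2⟩ := lorth hA heq hqe her hr hwr hrw
      exact ⟨wr, h1, h2⟩
  have hfix : FixTop A (πc ∘ πd) (πc d) := by
    constructor
    · exact hfixcd _ (htc.2 d) (le_trans' hA (exo_le hπc d) (le_refl' hA d))
    · intro a
      exact le_glb hA hπc htc (hled a) (hlec a)
  exact ⟨hexo, hfix⟩

/-! ### The complement map -/

theorem compl_spec (hA : A.IsGPEA) (hπ : A.IsExo π) (e : E) :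
    A.R (π e) (A.exoCompl π e) e := by
  have hex : ∃ x, A.R (π e) x e := exo_le hπ e
  exact Classical.epsilon_spec hex

theorem compl_unique (hA : A.IsGPEA) (hπ : A.IsExo π) {e x : E} (h : A.R (π e) x e) :
    A.exoCompl π e = x := cancL hA (compl_spec hA hπ e) h

theorem pi_compl_zero (hA : A.IsGPEA) (hπ : A.IsExo π) (e : E) :
    π (A.exoCompl π e) = A.zero := exo_compl_zero hA hπ (compl_spec hA hπ e)

theorem compl_of_zero (hA : A.IsGPEA) (hπ : A.IsExo π) {e : E} (h : π e = A.zero) :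
    A.exoCompl π e = e := by
  have hs := compl_spec hA hπ e
  rw [h] at hs
  exact cancL hA hs (zL hA e)

theorem compl_le (hA : A.IsGPEA) (hπ : A.IsExo π) (e : E) : A.le (A.exoCompl π e) e :=
  le_of_R_right hA (compl_spec hA hπ e)

theorem compl_exo (hA : A.IsGPEA) (hπ : A.IsExo π) : A.IsExo (A.exoCompl π) := by
  refine ⟨?_, ?_, fun e => compl_le hA hπ e, ?_⟩
  · -- additivity
    intro e f s h
    have hp : A.perp (A.exoCompl π e) (π f) := by
      have := exo_perp hπ (exo_idem hπ f) (pi_compl_zero hA hπ e)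
      exact perp_symm this
    obtain ⟨z, w, hz, hw, hzw⟩ :=
      shuf hA (compl_spec hA hπ e) (compl_spec hA hπ f) h hp
    have hzs : z = π s := fnR hA hz (exo_add hπ h)
    rw [hzs] at hzw
    rwa [compl_unique hA hπ hzw]
  · -- idempotence
    intro e
    exact compl_of_zero hA hπ (pi_compl_zero hA hπ e)
  · -- EXC4
    intro e f h1 h2
    have hse := compl_spec hA hπ e
    rw [h1] at hse
    have hπe : π e = A.zero := cancR hA hse (zL hA e)
    have hsf := compl_spec hA hπ f
    rw [h2] at hsf
    have hπf : π f = f := (fnR hA hsf (zR hA (π f))).symm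
    exact perp_symm (exo_perp hπ hπf hπe)

/-- `exoCompl πc ∘ πd` is in the exocenter with fixed top `exoCompl πc d`,
provided `d` is central. This gives relative complements. -/
theorem sdiff_exo (hA : A.IsGPEA) (hπc : A.IsExo πc) (htc : FixTop A πc c)
    (hπd : A.IsExo πd) (htd : FixTop A πd d) (hd : A.Central d) :
    A.IsExo (A.exoCompl πc ∘ πd) ∧ FixTop A (A.exoCompl πc ∘ πd) (A.exoCompl πc d) := by
  set κ := A.exoCompl πc with hκ
  have hκexo : A.IsExo κ := compl_exo hA hπc
  have hexo : A.IsExo (κ ∘ πd) := by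
    refine ⟨fun e f s h => exo_add hκexo (exo_add hπd h), fun e => ?_, fun e => ?_, ?_⟩
    · -- idempotence
      have hx : A.le (κ (πd e)) d := le_trans' hA (exo_le hκexo (πd e)) (htd.2 e)
      have hdx : πd (κ (πd e)) = κ (πd e) := (fixed_iff hA hπd htd).2 hx
      have hcx : κ (κ (πd e)) = κ (πd e) := exo_idem hκexo (πd e)
      simp only [Function.comp_apply, hdx, hcx]
    · exact le_trans' hA (exo_le hκexo (πd e)) (exo_le hπd e)
    · -- EXC4
      intro e f he hf
      have hde : πd e = e := by
        have h1 : A.le e (πd e) := by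
          have := exo_le hκexo (πd e); rwa [show κ (πd e) = e from he] at this
        exact le_antisymm' hA (exo_le hπd e) h1
      have hκe : κ e = e := by have := he; rwa [show (κ ∘ πd) e = κ (πd e) from rfl, hde] at this
      have hπce : πc e = A.zero := by
        have hse := compl_spec hA hπc e
        rw [show A.exoCompl πc e = e from hκe] at hse
        exact cancR hA hse (zL hA e)
      -- from hf : κ (πd f) = 0, get πc (πd f) = πd f
      have hq : πc (πd f) = πd f := by
        have hsf := compl_spec hA hπc (πd f)
        rw [show A.exoCompl πc (πd f) = A.zero from hf] at hsf
        exact (fnR hA hsf (zR hA (πc (πd f)))).symm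
      obtain ⟨r, hr⟩ := exo_le hπd f
      have hr0 : πd r = A.zero := exo_compl_zero hA hπd hr
      obtain ⟨w, hqe, heq⟩ := exo_perp hπc hq hπce
      -- hqe : R (πd f) e w, heq : R e (πd f) w
      have her : A.perp e r := exo_perp hπd hde hr0
      have hwd : A.le w d := hd.2.2.1 e (πd f) w ((fixed_iff hA hπd htd).1 hde)
        (htd.2 f) heq
      have hww : πd w = w := (fixed_iff hA hπd htd).2 hwd
      obtain ⟨wr, hwr, hrw⟩ := exo_perp hπd hww hr0
      obtain ⟨h1, h2⟩ := lorth hA heq hqe her hr hwr hrw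
      exact ⟨wr, h1, h2⟩
  have hfix : FixTop A (κ ∘ πd) (κ d) := by
    constructor
    · have h1 : A.le (κ d) d := compl_le hA hπc d
      have hdf : πd (κ d) = κ d := (fixed_iff hA hπd htd).2 h1
      have hcf : κ (κ d) = κ d := exo_idem hκexo d
      simp only [Function.comp_apply, hdf, hcf]
    · intro a
      exact exo_mono hκexo (htd.2 a)
  exact ⟨hexo, hfix⟩

/-- If `c ⊕ d` is defined and `c` has an exocentral projection, then `πc d = 0`
and `c ⊥ d`. -/
theorem central_comm (hA : A.IsGPEA) (hπc : A.IsExo πc) (htc : FixTop A πc c)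
    {s : E} (hs : A.R c d s) : πc d = A.zero ∧ A.perp c d := by
  obtain ⟨r, hr⟩ := exo_le hπc d
  obtain ⟨cq, hcq1, hcq2⟩ := as2 hA hr hs
  have hq0 : πc d = A.zero := self_add_fix hA hπc htc (htc.2 d) hcq1
  refine ⟨hq0, exo_perp hπc htc.1 hq0⟩

/-- Monotonicity of orthosums. -/
theorem add_le_add (hA : A.IsGPEA) {x y t c' d' s : E}
    (hx : A.le x c') (hy : A.le y d') (ht : A.R x y t) (hs : A.R c' d' s)
    (hxd : A.perp x d') (hcd : A.R d' c' s) : A.le t s := by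
  obtain ⟨w, hw⟩ := hy
  obtain ⟨xd, hxd1, hxd2⟩ := hxd
  obtain ⟨xy, hxy1, hxy2⟩ := as2 hA hw hxd1
  have : xy = t := fnR hA hxy1 ht
  rw [this] at hxy2
  obtain ⟨z, hz⟩ := hx
  obtain ⟨dx, hdx1, hdx2⟩ := as2 hA hz hcd
  have : dx = xd := fnR hA hdx1 hxd2
  rw [this] at hdx2
  exact le_trans' hA ⟨w, hxy2⟩ ⟨z, hdx2⟩

/-- The sum construction: if `c ⊥ d` with `πc d = 0` and `πd c = 0`, then there
is an exocentral map `σ` with fixed top `s = c ⊕ d` satisfying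
`σ a = πc a ⊕ πd a`. -/
theorem sum_exo (hA : A.IsGPEA) (hπc : A.IsExo πc) (htc : FixTop A πc c)
    (hπd : A.IsExo πd) (htd : FixTop A πd d)
    (hcd0 : πc d = A.zero) (hdc0 : πd c = A.zero)
    {s : E} (hs : A.R c d s) (hs2 : A.R d c s) :
    ∃ σ : E → E, A.IsExo σ ∧ FixTop A σ s ∧ ∀ a, A.R (πc a) (πd a) (σ a) := by
  have hcd00 : ∀ b, πc (πd b) = A.zero := fun b => by
    have h1 : A.le (πc (πd b)) (πc d) := exo_mono hπc (htd.2 b)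
    rw [hcd0] at h1
    exact le_zero hA h1
  have hdc00 : ∀ b, πd (πc b) = A.zero := fun b => by
    have h1 : A.le (πd (πc b)) (πd c) := exo_mono hπd (htc.2 b)
    rw [hdc0] at h1
    exact le_zero hA h1
  have horth : ∀ a b, A.perp (πc a) (πd b) := fun a b =>
    exo_perp hπc (exo_idem hπc a) (hcd00 b)
  set σ : E → E := fun a => Classical.choose (horth a a) with hσ
  have hspec1 : ∀ a, A.R (πc a) (πd a) (σ a) := fun a => (Classical.choose_spec (horth a a)).1
  have hspec2 : ∀ a, A.R (πd a) (πc a) (σ a) := fun a => (Classical.choose_spec (horth a a)).2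
  have hπcσ : ∀ a, πc (σ a) = πc a := fun a => by
    have h1 := exo_add hπc (hspec1 a)
    rw [exo_idem hπc, hcd00 a] at h1
    exact fnR hA h1 (zR hA (πc a))
  have hπdσ : ∀ a, πd (σ a) = πd a := fun a => by
    have h1 := exo_add hπd (hspec1 a)
    rw [exo_idem hπd, hdc00 a] at h1
    exact fnR hA h1 (zL hA (πd a))
  have hexo : A.IsExo σ := by
    refine ⟨?_, ?_, ?_, ?_⟩
    · -- additivity
      intro a b t h
      obtain ⟨z, w, hz, hw, hzw⟩ :=
        shuf hA (exo_add hπc h) (exo_add hπd h) (hspec1 t) (horth b a)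
      rw [fnR hA hz (hspec1 a), fnR hA hw (hspec1 b)] at hzw
      exact hzw
    · -- idempotence
      intro a
      have h1 := hspec1 (σ a)
      rw [hπcσ a, hπdσ a] at h1
      exact fnR hA h1 (hspec1 a)
    · -- σ a ≤ a
      intro a
      obtain ⟨ρ, hρ⟩ := exo_le hπc a
      have hda : πd a = πd ρ := by
        have h1 := exo_add hπd hρ
        rw [hdc00 a] at h1
        exact fnR hA h1 (zL hA (πd ρ))
      obtain ⟨ρ₂, hρ₂⟩ := exo_le hπd ρ
      obtain ⟨u, hu1, hu2⟩ := as2 hA hρ₂ hρ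
      have : u = σ a := by
        have h1 := hspec1 a
        rw [hda] at h1
        exact fnR hA hu1 h1
      rw [this] at hu2
      exact ⟨ρ₂, hu2⟩
    · -- EXC4
      intro e f he hf
      have hf' := hspec1 f
      rw [hf] at hf'
      obtain ⟨hcf0, hdf0⟩ := posR hA hf'
      have hxe : A.R (πc e) (πd e) e := by have := hspec1 e; rwa [he] at this
      have hyx : A.R (πd e) (πc e) e := by have := hspec2 e; rwa [he] at this
      have hfy : A.perp f (πd e) := perp_symm (exo_perp hπd (exo_idem hπd e) hdf0)
      have hfx : A.perp f (πc e) := perp_symm (exo_perp hπc (exo_idem hπc e) hcf0)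
      obtain ⟨w, hfy1, hyf1⟩ := hfy
      have hπcw : πc w = A.zero := by
        have h1 := exo_add hπc hfy1
        rw [hcf0, hcd00 e] at h1
        exact fnR hA h1 (zR hA A.zero)
      have hwx : A.perp w (πc e) := perp_symm (exo_perp hπc (exo_idem hπc e) hπcw)
      obtain ⟨wr, hwx1, hxw1⟩ := hwx
      obtain ⟨h1, h2⟩ := lorth hA hfy1 hyf1 hfx hyx hwx1 hxw1
      exact ⟨wr, h2, h1⟩
  have hfix : FixTop A σ s := by
    have hπcs : πc s = c := by
      have h1 := exo_add hπc hs
      rw [htc.1, hcd0] at h1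
      exact fnR hA h1 (zR hA c)
    have hπds : πd s = d := by
      have h1 := exo_add hπd hs
      rw [htd.1, hdc0] at h1
      exact fnR hA h1 (zL hA d)
    constructor
    · have h1 := hspec1 s
      rw [hπcs, hπds] at h1
      exact fnR hA h1 hs
    · intro a
      exact add_le_add hA (htc.2 a) (htd.2 a) (hspec1 a) hs
        (exo_perp hπc (exo_idem hπc a) hcd0) hs2
  exact ⟨σ, hexo, hfix, hspec1⟩

end GPEAX
namespace GPEAX
open GPEApaper PartialAlg

variable {E : Type u} {A : PartialAlg E}

theorem rdiv_eq (hA : A.IsGPEA) {a b x : E} (h : A.R a x b) : A.rdiv a b = x := by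
  have hex : ∃ y, A.R a y b := ⟨x, h⟩
  have hspec := Classical.epsilon_spec hex
  exact cancL hA hspec h

theorem central_zero (hA : A.IsGPEA) : A.Central A.zero := by
  refine ⟨?_, ?_, ?_, ?_⟩
  · intro a
    exact ⟨A.zero, a, le_refl' hA A.zero, ⟨a, zR hA a⟩, zL hA a⟩
  · intro a b ha _
    have ha0 : a = A.zero := le_zero hA ha
    subst ha0
    exact ⟨b, zL hA b, zR hA b⟩
  · intro a b s ha hb h
    have ha0 : a = A.zero := le_zero hA ha
    have hb0 : b = A.zero := le_zero hA hb
    subst ha0; subst hb0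
    have : s = A.zero := fnR hA h (zR hA A.zero)
    rw [this]; exact le_refl' hA A.zero
  · intro a b ab _ _ _
    exact ⟨ab, zR hA ab⟩

theorem id_exo (hA : A.IsGPEA) : A.IsExo (id : E → E) := by
  refine ⟨fun e f s h => h, fun e => rfl, fun e => le_refl' hA e, ?_⟩
  intro e f _ hf
  have : f = A.zero := hf
  subst this
  exact ⟨e, zR hA e, zL hA e⟩

end GPEAX

open GPEAX in
open GPEApaper PartialAlg in
/-- Theorem 4.5: with π_c the unique element of ΓEX(E) satisfying
π_c(E) = E[0,c] for central c: (i) {π_c : c ∈ Γ(E)} is a sublattice of the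
boolean algebra ΓEX(E) and a generalized boolean algebra; (ii) Γ(E) is a
commutative lattice-ordered sub-GPEA of E; (iii) c ↦ π_c is a lattice
isomorphism of Γ(E) onto {π_c : c ∈ Γ(E)}; (iv) Γ(E) is a generalized
boolean algebra (distributive, relatively complemented, smallest element 0);
(v) E is a PEA (has a greatest element) iff {π_c : c ∈ Γ(E)} = ΓEX(E). -/
theorem stmt_11 {E : Type u} (A : PartialAlg E) (hA : A.IsGPEA)
    (p : E → E → E)
    (hp : ∀ c : E, A.Central c →
      A.IsExo (p c) ∧ Set.range (p c) = {a : E | A.le a c})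
    (hpu : ∀ c : E, A.Central c → ∀ π : E → E, A.IsExo π →
      Set.range π = {a : E | A.le a c} → π = p c) :
    -- (i) {π_c : c ∈ Γ(E)} is a sublattice of ΓEX(E) (closed under the meet,
    -- which is composition, and the join (π′ ∘ ξ′)′), and it is a
    -- generalized boolean algebra under the order of ΓEX(E)
    ((∀ c d : E, A.Central c → A.Central d →
        (∃ m : E, A.Central m ∧ p c ∘ p d = p m) ∧
        (∃ jn : E, A.Central jn ∧ A.exoSup (p c) (p d) = p jn)) ∧
      ∃ B : GeneralizedBooleanAlgebra {π : E → E // ∃ c, A.Central c ∧ π = p c},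
        letI := B; ∀ x y : {π : E → E // ∃ c, A.Central c ∧ π = p c},
          x ≤ y ↔ A.exoLe x.1 y.1) ∧
    -- (ii) Γ(E) is a commutative lattice-ordered sub-GPEA of E
    (A.Central A.zero ∧
      (∀ c d s : E, A.Central c → A.Central d → A.R c d s → A.Central s) ∧
      (∀ c d : E, A.Central c → A.Central d → A.Defined c d → A.perp c d) ∧
      (∀ c d : E, A.Central c → A.Central d →
        (∃ m : E, A.Central m ∧ A.IsInf {c, d} m) ∧
        (∃ jn : E, A.Central jn ∧ A.IsSup {c, d} jn))) ∧
    -- (iii) c ↦ π_c is a lattice (order) isomorphism onto {π_c : c ∈ Γ(E)}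
    ((∀ c d : E, A.Central c → A.Central d → (A.le c d ↔ A.exoLe (p c) (p d))) ∧
      ∀ c d : E, A.Central c → A.Central d → p c = p d → c = d) ∧
    -- (iv) Γ(E) is a generalized boolean algebra with smallest element 0
    (∃ B : GeneralizedBooleanAlgebra {c : E // A.Central c}, letI := B;
      (∀ x y : {c : E // A.Central c}, x ≤ y ↔ A.le x.1 y.1) ∧
      (⊥ : {c : E // A.Central c}).1 = A.zero) ∧
    -- (v) E has a greatest element iff {π_c : c ∈ Γ(E)} = ΓEX(E)
    ((∃ top : E, ∀ a : E, A.le a top) ↔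
      ∀ π : E → E, A.IsExo π → ∃ c, A.Central c ∧ π = p c) := by
  classical
  have hex : ∀ c : E, A.Central c → A.IsExo (p c) := fun c hc => (hp c hc).1
  have htp : ∀ c : E, A.Central c → FixTop A (p c) c := fun c hc =>
    fixtop_of_range hA (hex c hc) (hp c hc).2
  have hpu' : ∀ c : E, A.Central c → ∀ π : E → E, A.IsExo π → FixTop A π c → π = p c :=
    fun c hc π hπ ht => hpu c hc π hπ (range_of_fixtop hA hπ ht)
  -- meets
  have hmeet : ∀ c d : E, A.Central c → A.Central d →
      A.Central (p c d) ∧ (p c ∘ p d = p (p c d)) ∧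
      A.le (p c d) c ∧ A.le (p c d) d ∧
      (∀ z, A.le z c → A.le z d → A.le z (p c d)) := by
    intro c d hc hd
    obtain ⟨hσ, hft⟩ := meet_exo hA (hex c hc) (htp c hc) (hex d hd) (htp d hd) hd
    have hcm : A.Central (p c d) := central_of_fixtop hA hσ hft
    refine ⟨hcm, hpu' _ hcm _ hσ hft, (htp c hc).2 d, exo_le (hex c hc) d, ?_⟩
    intro z hzc hzd
    exact le_glb hA (hex c hc) (htp c hc) hzd hzc
  have hmeet_comm : ∀ c d : E, A.Central c → A.Central d → p c d = p d c := by
    intro c d hc hd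
    obtain ⟨_, _, h1c, h1d, h1g⟩ := hmeet c d hc hd
    obtain ⟨_, _, h2d, h2c, h2g⟩ := hmeet d c hd hc
    exact le_antisymm' hA (h2g _ h1d h1c) (h1g _ h2c h2d)
  -- commutativity
  have hcomm : ∀ c d : E, A.Central c → A.Central d → A.Defined c d → A.perp c d := by
    rintro c d hc hd ⟨s, hs⟩
    exact (central_comm hA (hex c hc) (htp c hc) hs).2
  -- sums
  have hsum : ∀ c d s : E, A.Central c → A.Central d → A.R c d s →
      A.Central s ∧ ∀ a, A.R (p c a) (p d a) (p s a) := by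
    intro c d s hc hd hs
    have h1 := central_comm hA (hex c hc) (htp c hc) hs
    obtain ⟨s', hs1', hs2'⟩ := h1.2
    have hss : s' = s := fnR hA hs1' hs
    rw [hss] at hs1' hs2'
    have h2 := central_comm hA (hex d hd) (htp d hd) hs2'
    obtain ⟨σ, hσexo, hσft, hσspec⟩ :=
      sum_exo hA (hex c hc) (htp c hc) (hex d hd) (htp d hd) h1.1 h2.1 hs hs2'
    have hcs : A.Central s := central_of_fixtop hA hσexo hσft
    have hσp : σ = p s := hpu' s hcs σ hσexo hσft
    rw [← hσp]
    exact ⟨hcs, hσspec⟩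
  -- relative complements are central
  have hsdiff : ∀ c d : E, A.Central c → A.Central d →
      A.Central (A.exoCompl (p c) d) := by
    intro c d hc hd
    obtain ⟨hτ, hft⟩ := sdiff_exo hA (hex c hc) (htp c hc) (hex d hd) (htp d hd) hd
    exact central_of_fixtop hA hτ hft
  -- joins
  have hjoin : ∀ c d : E, A.Central c → A.Central d →
      ∃ j : E, A.Central j ∧ A.R c (A.exoCompl (p c) d) j ∧
        (A.le c j ∧ A.le d j ∧ ∀ b, A.le c b → A.le d b → A.le j b) ∧
        A.exoSup (p c) (p d) = p j ∧
        (∀ a, A.R (p c a) (p (A.exoCompl (p c) d) a) (p j a)) := by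
    intro c d hc hd
    set f₀ := A.exoCompl (p c) d with hf₀def
    have hf₀c : A.Central f₀ := hsdiff c d hc hd
    have hcf₀0 : p c f₀ = A.zero := pi_compl_zero hA (hex c hc) d
    obtain ⟨j, hj1, hj2⟩ := exo_perp (hex c hc) (htp c hc).1 hcf₀0
    obtain ⟨hjc, hjspec⟩ := hsum c f₀ j hc hf₀c hj1
    have hcj : A.le c j := ⟨f₀, hj1⟩
    have hf₀d : A.le f₀ d := compl_le hA (hex c hc) d
    have hdj : A.le d j := by
      refine add_le_add hA ((htp c hc).2 d) (le_refl' hA f₀) ?_ hj1 ?_ hj2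
      · exact compl_spec hA (hex c hc) d
      · exact exo_perp (hex c hc) (exo_idem (hex c hc) d) hcf₀0
    have hleast : ∀ b, A.le c b → A.le d b → A.le j b := by
      intro b hcb hdb
      have hpcb : p c b = c := le_antisymm' hA ((htp c hc).2 b)
        (by have h := exo_mono (hex c hc) hcb; rwa [(htp c hc).1] at h)
      have hρ : A.R c (A.exoCompl (p c) b) b := by
        have h := compl_spec hA (hex c hc) b; rwa [hpcb] at h
      have hf₀ρ : A.le f₀ (A.exoCompl (p c) b) := exo_mono (compl_exo hA (hex c hc)) hdb
      obtain ⟨u, hu⟩ := hf₀ρ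
      obtain ⟨cf, hcf1, hcf2⟩ := as2 hA hu hρ
      rw [fnR hA hcf1 hj1] at hcf2
      exact ⟨u, hcf2⟩
    have hsupeq : A.exoSup (p c) (p d) = p j := by
      funext e
      set v₀ := A.exoCompl (p d) e with hv₀
      set χe := A.exoCompl (p c) v₀ with hχ
      have hv₀spec : A.R (p d e) v₀ e := compl_spec hA (hex d hd) e
      have hχspec : A.R (p c v₀) χe v₀ := compl_spec hA (hex c hc) v₀
      obtain ⟨t, ht1, ht2⟩ := as2 hA hχspec hv₀spec
      have htj : A.le t j := hjc.2.2.1 _ _ _ (le_trans' hA ((htp d hd).2 e) hdj)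
        (le_trans' hA ((htp c hc).2 v₀) hcj) ht1
      have hjt : p j t = t := (fixed_iff hA (hex j hjc) (htp j hjc)).2 htj
      have hpcχ : p c χe = A.zero := pi_compl_zero hA (hex c hc) v₀
      have hpdχ : p d χe = A.zero := by
        have h1 : A.le (p d χe) (p d v₀) := exo_mono (hex d hd) (le_of_R_right hA hχspec)
        rw [show p d v₀ = A.zero from pi_compl_zero hA (hex d hd) e] at h1
        exact le_zero hA h1
      have hpf₀χ : p f₀ χe = A.zero := by
        have h1 : A.le (p f₀ χe) (p d χe) := le_glb hA (hex d hd) (htp d hd)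
          (exo_le (hex f₀ hf₀c) χe) (le_trans' hA ((htp f₀ hf₀c).2 χe) hf₀d)
        rw [hpdχ] at h1
        exact le_zero hA h1
      have hpjχ : p j χe = A.zero := by
        have h1 := hjspec χe
        rw [hpcχ, hpf₀χ] at h1
        exact fnR hA h1 (zR hA A.zero)
      obtain ⟨w', htχ, hχt⟩ := exo_perp (hex j hjc) hjt hpjχ
      have hw' : w' = e := fnR hA htχ ht2
      rw [hw'] at hχt
      have hpje : p j e = t := by
        have h1 := exo_add (hex j hjc) ht2
        rw [hjt, hpjχ] at h1
        exact fnR hA h1 (zR hA t)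
      have hχt' : A.R χe (p j e) e := by rw [hpje]; exact hχt
      exact rdiv_eq hA hχt'
    exact ⟨j, hjc, hj1, ⟨hcj, hdj, hleast⟩, hsupeq, hjspec⟩
  -- order isomorphism
  have hle_iff : ∀ c d : E, A.Central c → A.Central d →
      (A.le c d ↔ A.exoLe (p c) (p d)) := by
    intro c d hc hd
    constructor
    · intro hcd
      funext a
      have h1 : A.le (p c (p d a)) (p c a) := le_glb hA (hex c hc) (htp c hc)
        (le_trans' hA (exo_le (hex c hc) (p d a)) (exo_le (hex d hd) a)) ((htp c hc).2 (p d a))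
      have h2 : A.le (p c a) (p c (p d a)) := le_glb hA (hex c hc) (htp c hc)
        (le_glb hA (hex d hd) (htp d hd) (exo_le (hex c hc) a)
          (le_trans' hA ((htp c hc).2 a) hcd))
        ((htp c hc).2 a)
      exact le_antisymm' hA h2 h1
    · intro h
      have h1 : c = p c (p d c) := by
        have := congrFun h c
        rwa [(htp c hc).1] at this
      have h2 : A.le c (p d c) := by
        have hx := exo_le (hex c hc) (p d c)
        rwa [← h1] at hx
      exact le_trans' hA h2 ((htp d hd).2 c)
  have hinj : ∀ c d : E, A.Central c → A.Central d → p c = p d → c = d := by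
    intro c d hc hd h
    have h1 : c = p d c := by rw [← h, (htp c hc).1]
    have h2 : d = p c d := by rw [h, (htp d hd).1]
    refine le_antisymm' hA ?_ ?_
    · rw [h1]; exact (htp d hd).2 c
    · rw [h2]; exact (htp c hc).2 d
  have hIsInf : ∀ c d : E, A.Central c → A.Central d → A.IsInf {c, d} (p c d) := by
    intro c d hc hd
    obtain ⟨_, _, h1, h2, h3⟩ := hmeet c d hc hd
    constructor
    · intro a ha
      rcases ha with rfl | ha
      · exact h1
      · rw [Set.mem_singleton_iff] at ha; subst ha; exact h2
    · intro b hb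
      exact h3 b (hb c (Set.mem_insert c {d})) (hb d (Set.mem_insert_of_mem c rfl))
  -- Generalized Boolean algebra structure on the central elements
  letI instPO : PartialOrder {c : E // A.Central c} :=
    { le := fun x y => A.le x.1 y.1
      le_refl := fun x => le_refl' hA x.1
      le_trans := fun _ _ _ h1 h2 => le_trans' hA h1 h2
      le_antisymm := fun _ _ h1 h2 => Subtype.ext (le_antisymm' hA h1 h2) }
  letI instLat : Lattice {c : E // A.Central c} :=
    { instPO with
      sup := fun x y => ⟨(hjoin x.1 y.1 x.2 y.2).choose, (hjoin x.1 y.1 x.2 y.2).choose_spec.1⟩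
      le_sup_left := fun x y => ((hjoin x.1 y.1 x.2 y.2).choose_spec.2.2.1).1
      le_sup_right := fun x y => ((hjoin x.1 y.1 x.2 y.2).choose_spec.2.2.1).2.1
      sup_le := fun x y z h1 h2 => ((hjoin x.1 y.1 x.2 y.2).choose_spec.2.2.1).2.2 z.1 h1 h2
      inf := fun x y => ⟨p x.1 y.1, (hmeet x.1 y.1 x.2 y.2).1⟩
      inf_le_left := fun x y => (hmeet x.1 y.1 x.2 y.2).2.2.1
      inf_le_right := fun x y => (hmeet x.1 y.1 x.2 y.2).2.2.2.1
      le_inf := fun x y z h1 h2 => (hmeet y.1 z.1 y.2 z.2).2.2.2.2 x.1 h1 h2 }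
  have hdistrib : ∀ x y z : {c : E // A.Central c}, x ⊓ (y ⊔ z) ≤ x ⊓ y ⊔ x ⊓ z := by
    intro x y z
    obtain ⟨hjc, _, ⟨hcj, hdj, _⟩, _, hjspec⟩ := (hjoin y.1 z.1 y.2 z.2).choose_spec
    have hf₀c : A.Central (A.exoCompl (p y.1) z.1) := hsdiff y.1 z.1 y.2 z.2
    have hf₀d : A.le (A.exoCompl (p y.1) z.1) z.1 := compl_le hA (hex y.1 y.2) z.1
    have ha := hjspec x.1
    have h1 : A.le (p y.1 x.1) (p x.1 y.1) := le_glb hA (hex x.1 x.2) (htp x.1 x.2)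
      ((htp y.1 y.2).2 x.1) (exo_le (hex y.1 y.2) x.1)
    have h2 : A.le (p (A.exoCompl (p y.1) z.1) x.1) (p x.1 z.1) :=
      le_glb hA (hex x.1 x.2) (htp x.1 x.2)
        (le_trans' hA ((htp _ hf₀c).2 x.1) hf₀d) (exo_le (hex _ hf₀c) x.1)
    have hJc : A.Central (x ⊓ y ⊔ x ⊓ z).1 := (x ⊓ y ⊔ x ⊓ z).2
    have hley : A.le (p x.1 y.1) (x ⊓ y ⊔ x ⊓ z).1 :=
      le_sup_left (a := x ⊓ y) (b := x ⊓ z)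
    have hlez : A.le (p x.1 z.1) (x ⊓ y ⊔ x ⊓ z).1 :=
      le_sup_right (a := x ⊓ y) (b := x ⊓ z)
    have h3 : A.le (p (hjoin y.1 z.1 y.2 z.2).choose x.1) (x ⊓ y ⊔ x ⊓ z).1 :=
      hJc.2.2.1 _ _ _ (le_trans' hA h1 hley) (le_trans' hA h2 hlez) ha
    show A.le (p x.1 (hjoin y.1 z.1 y.2 z.2).choose) (x ⊓ y ⊔ x ⊓ z).1
    rw [hmeet_comm x.1 (hjoin y.1 z.1 y.2 z.2).choose x.2 hjc]
    exact h3
  letI instDL : DistribLattice {c : E // A.Central c} := DistribLattice.ofInfSupLe hdistrib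
  have hpmf : ∀ a b : E, A.Central a → A.Central b →
      p (p a b) (A.exoCompl (p b) a) = A.zero := by
    intro a b ha hb
    have hmc : A.Central (p a b) := (hmeet a b ha hb).1
    have h1 : A.le (p (p a b) (A.exoCompl (p b) a)) b :=
      le_trans' hA ((htp _ hmc).2 _) (hmeet a b ha hb).2.2.2.1
    have hfix : p b (p (p a b) (A.exoCompl (p b) a)) = p (p a b) (A.exoCompl (p b) a) :=
      (fixed_iff hA (hex b hb) (htp b hb)).2 h1
    have h2 : A.le (p b (p (p a b) (A.exoCompl (p b) a))) (p b (A.exoCompl (p b) a)) :=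
      exo_mono (hex b hb) (exo_le (hex _ hmc) _)
    rw [hfix, pi_compl_zero hA (hex b hb) a] at h2
    exact le_zero hA h2
  letI instGBA : GeneralizedBooleanAlgebra {c : E // A.Central c} :=
    { instDL with
      sdiff := fun x y => ⟨A.exoCompl (p y.1) x.1, hsdiff y.1 x.1 y.2 x.2⟩
      bot := ⟨A.zero, central_zero hA⟩
      sup_inf_sdiff := fun a b => by
        apply Subtype.ext
        have hmc : A.Central (p a.1 b.1) := (hmeet a.1 b.1 a.2 b.2).1
        have hfc : A.Central (A.exoCompl (p b.1) a.1) := hsdiff b.1 a.1 b.2 a.2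
        obtain ⟨_, hjR, _, _, _⟩ :=
          (hjoin (p a.1 b.1) (A.exoCompl (p b.1) a.1) hmc hfc).choose_spec
        have hRa : A.R (p a.1 b.1) (A.exoCompl (p b.1) a.1) a.1 := by
          have h := compl_spec hA (hex b.1 b.2) a.1
          rwa [hmeet_comm b.1 a.1 b.2 a.2] at h
        rw [← compl_of_zero hA (hex (p a.1 b.1) hmc) (hpmf a.1 b.1 a.2 b.2)] at hRa
        exact fnR hA hjR hRa
      inf_inf_sdiff := fun a b => by
        apply Subtype.ext
        exact hpmf a.1 b.1 a.2 b.2 }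
  refine ⟨⟨?_, ?_⟩, ⟨central_zero hA, fun c d s hc hd h => (hsum c d s hc hd h).1,
      hcomm, ?_⟩, ⟨hle_iff, hinj⟩, ?_, ?_⟩
  · -- (i) first part
    intro c d hc hd
    obtain ⟨j, hjc, _, _, hsupeq, _⟩ := hjoin c d hc hd
    exact ⟨⟨p c d, (hmeet c d hc hd).1, (hmeet c d hc hd).2.1⟩, ⟨j, hjc, hsupeq⟩⟩
  · -- (i) second part: GBA on the p c's
    have hGval : ∀ x : {π : E → E // ∃ c, A.Central c ∧ π = p c},
        p x.2.choose = x.1 := fun x => x.2.choose_spec.2.symm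
    let G : {π : E → E // ∃ c, A.Central c ∧ π = p c} → {c : E // A.Central c} :=
      fun x => ⟨x.2.choose, x.2.choose_spec.1⟩
    let F : {c : E // A.Central c} → {π : E → E // ∃ c, A.Central c ∧ π = p c} :=
      fun z => ⟨p z.1, z.1, z.2, rfl⟩
    have hGinj : Function.Injective G := by
      intro x y h
      apply Subtype.ext
      have h1 : (G x).1 = (G y).1 := congrArg Subtype.val h
      rw [← hGval x, ← hGval y]
      show p (G x).1 = p (G y).1
      rw [h1]
    have hGF : ∀ w : {c : E // A.Central c}, G (F w) = w := by
      intro w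
      apply Subtype.ext
      exact hinj _ _ (G (F w)).2 w.2 (hGval (F w))
    letI : Max {π : E → E // ∃ c, A.Central c ∧ π = p c} := ⟨fun x y => F (G x ⊔ G y)⟩
    letI : Min {π : E → E // ∃ c, A.Central c ∧ π = p c} := ⟨fun x y => F (G x ⊓ G y)⟩
    letI : Bot {π : E → E // ∃ c, A.Central c ∧ π = p c} := ⟨F ⊥⟩
    letI : SDiff {π : E → E // ∃ c, A.Central c ∧ π = p c} := ⟨fun x y => F (G x \ G y)⟩
    letI : LE {π : E → E // ∃ c, A.Central c ∧ π = p c} := ⟨fun x y => G x ≤ G y⟩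
    letI : LT {π : E → E // ∃ c, A.Central c ∧ π = p c} := ⟨fun x y => G x < G y⟩
    letI instP : GeneralizedBooleanAlgebra {π : E → E // ∃ c, A.Central c ∧ π = p c} :=
      hGinj.generalizedBooleanAlgebra G Iff.rfl Iff.rfl (fun _ _ => hGF _) (fun _ _ => hGF _) (hGF _)
        (fun _ _ => hGF _)
    refine ⟨instP, fun x y => ?_⟩
    have h := hle_iff (G x).1 (G y).1 (G x).2 (G y).2
    rw [hGval x, hGval y] at h
    exact h
  · -- (ii) lattice part
    intro c d hc hd
    obtain ⟨j, hjc, _, ⟨hcj, hdj, hleast⟩, _, _⟩ := hjoin c d hc hd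
    refine ⟨⟨p c d, (hmeet c d hc hd).1, hIsInf c d hc hd⟩, ⟨j, hjc, ?_, ?_⟩⟩
    · intro a ha
      rcases ha with rfl | ha
      · exact hcj
      · rw [Set.mem_singleton_iff] at ha; subst ha; exact hdj
    · intro b hb
      exact hleast b (hb c (Set.mem_insert c {d})) (hb d (Set.mem_insert_of_mem c rfl))
  · -- (iv) GBA on central elements
    exact ⟨instGBA, fun x y => Iff.rfl, rfl⟩
  · -- (v)
    constructor
    · rintro ⟨top, htop⟩ π hπ
      have hft : FixTop A π (π top) := ⟨exo_idem hπ top, fun a => exo_mono hπ (htop a)⟩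
      have hc := central_of_fixtop hA hπ hft
      exact ⟨π top, hc, hpu' _ hc _ hπ hft⟩
    · intro h
      obtain ⟨c, hc, hcid⟩ := h id (id_exo hA)
      refine ⟨c, fun a => ?_⟩
      have h1 : p c a = a := (congrFun hcid a).symm
      rw [← h1]
      exact (htp c hc).2 a
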